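/- In the commutative ring R = ℤ[x,y]/(2y), the intersection of the principal ideal generated by the class of y with the principal ideal generated by 2 is the zero ideal. -/

import Mathlib

open MvPolynomial

lemma aux_X_dvd (b : MvPolynomial (Fin 2) ℤ) (h : X 1 ∣ 2 * b) : X 1 ∣ b := by
  rw [X_dvd_iff_modMonomial_eq_zero] at h ⊢
  have hmod : (2 * b).modMonomial (Finsupp.single 1 1)
      = 2 * b.modMonomial (Finsupp.single 1 1) := by
    ext m
    by_cases hm : Finsupp.single 1 1 ≤ m
    · simp only [two_mul, coeff_add, coeff_modMonomial_of_le _ hm, add_zero]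
    · simp only [two_mul, coeff_add, coeff_modMonomial_of_not_le _ hm]
  rw [hmod] at h
  rcases mul_eq_zero.mp h with h2 | h0
  · exact absurd h2 two_ne_zero
  · exact h0

noncomputable abbrev stmt4R : Type :=
  MvPolynomial (Fin 2) ℤ ⧸ Ideal.span ({2 * X 1} : Set (MvPolynomial (Fin 2) ℤ))

noncomputable abbrev stmt4y : stmt4R :=
  Ideal.Quotient.mk _ (X 1 : MvPolynomial (Fin 2) ℤ)

theorem stmt_4 :
    Ideal.span ({stmt4y} : Set stmt4R) ⊓ Ideal.span ({(2 : stmt4R)} : Set stmt4R) = ⊥ := by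
  rw [eq_bot_iff]
  intro z hz
  obtain ⟨hz1, hz2⟩ := Submodule.mem_inf.mp hz
  rw [Ideal.mem_span_singleton] at hz1 hz2
  obtain ⟨a, rfl⟩ := hz1
  obtain ⟨A, rfl⟩ := Ideal.Quotient.mk_surjective a
  obtain ⟨b, hb⟩ := hz2
  obtain ⟨B, rfl⟩ := Ideal.Quotient.mk_surjective b
  have hmk : Ideal.Quotient.mk _ (X 1 * A - 2 * B) = (0 : stmt4R) := by
    have : (Ideal.Quotient.mk _ (X 1 * A) : stmt4R) = Ideal.Quotient.mk _ (2 * B) := by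
      rw [map_mul, map_mul, map_ofNat]; exact hb
    simp [map_sub, map_mul, this]
  rw [Ideal.Quotient.eq_zero_iff_mem, Ideal.mem_span_singleton] at hmk
  obtain ⟨Cc, hC⟩ := hmk
  have h1 : X 1 * A = 2 * (B + X 1 * Cc) := by linear_combination hC
  obtain ⟨D, hD⟩ := aux_X_dvd _ ⟨A, h1.symm⟩
  have h2 : X 1 * A = 2 * X 1 * D := by rw [h1, hD]; ring
  have : (stmt4y * Ideal.Quotient.mk _ A : stmt4R) = Ideal.Quotient.mk _ (X 1 * A) := by
    simp [map_mul]
  rw [Ideal.mem_bot, this, h2, Ideal.Quotient.eq_zero_iff_mem,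
    Ideal.mem_span_singleton]
  exact Dvd.intro D rfl
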